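/- The concatenation-product ⨰ on surreal numbers, defined by ℓ(x ⨰ y) = ℓ(x)·ℓ(y) (ordinal product) and (x ⨰ y)[ℓ(x)·α ∔ β] = y[α]·x[β] for α < ℓ(y), β < ℓ(x), is associative with identity 1, distributes over ∔ on the left (x ⨰ (y ∔ z) = (x ⨰ y) ∔ (x ⨰ z)), and satisfies x ⨰ (−1) = −x. -/

import Mathlib

open Ordinal

attribute [local instance] Classical.propDecidable

/-- A surreal number presented as a sign sequence: a map from an ordinal (its
length) to `{-1, +1}`, extended by `0` beyond its length. -/
structure SSurreal : Type 1 where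
  length : Ordinal.{0}
  sign : Ordinal → ℤ
  sign_mem : ∀ α, α < length → sign α = 1 ∨ sign α = -1
  sign_zero : ∀ α, ¬ α < length → sign α = 0

namespace SSurreal

/-- Simplicity: `x ⊑ y`, i.e. `x` is an initial segment of `y`. -/
def sle (x y : SSurreal) : Prop := ∀ α, α < x.length → x.sign α = y.sign α

/-- Strict simplicity `x ⊏ y`. -/
def slt (x y : SSurreal) : Prop := sle x y ∧ x ≠ y

/-- The (lexicographic, Conway) order on sign sequences. -/
def lt (x y : SSurreal) : Prop :=
  ∃ α, (∀ β, β < α → x.sign β = y.sign β) ∧ x.sign α < y.sign α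

/-- The empty sign sequence, i.e. the surreal number `0`. -/
noncomputable def zero : SSurreal :=
  ⟨0, fun _ => 0, fun α h => absurd h (by simp), fun _ _ => rfl⟩

/-- The ordinal `o` viewed as the constant `+1` sign sequence of length `o`. -/
noncomputable def ofOrdinal (o : Ordinal) : SSurreal :=
  ⟨o, fun α => if α < o then 1 else 0, fun α h => Or.inl (if_pos h), fun α h => if_neg h⟩

/-- The surreal number `1`. -/
noncomputable def one : SSurreal := ofOrdinal 1

/-- The surreal number `-1`. -/
noncomputable def negOne : SSurreal :=
  ⟨1, fun α => if α < 1 then -1 else 0, fun α h => Or.inr (if_pos h), fun α h => if_neg h⟩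

/-- Negation: flip every sign. -/
noncomputable def neg (x : SSurreal) : SSurreal :=
  ⟨x.length, fun α => - x.sign α,
    fun α h => by rcases x.sign_mem α h with h' | h' <;> simp [h'],
    fun α h => by simp [x.sign_zero α h]⟩

/-- Concatenation `x ∔ y` of sign sequences. -/
noncomputable def concat (x y : SSurreal) : SSurreal where
  length := x.length + y.length
  sign α := if α < x.length then x.sign α else y.sign (α - x.length)
  sign_mem := by
    intro α h
    try dsimp only
    by_cases hx : α < x.length
    · rw [if_pos hx]; exact x.sign_mem α hx
    · rw [if_neg hx]
      refine y.sign_mem _ ?_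
      have hle : x.length ≤ α := not_lt.mp hx
      have := Ordinal.sub_lt_of_le hle (c := y.length)
      exact this.mpr h
  sign_zero := by
    intro α h
    try dsimp only
    have hx : ¬ α < x.length := fun hx =>
      h (hx.trans_le le_self_add)
    rw [if_neg hx]
    refine y.sign_zero _ ?_
    intro hy
    exact h ((Ordinal.sub_lt_of_le (not_lt.mp hx)).mp hy)

/-- The concatenation product `x ⨰ y` of sign sequences. -/
noncomputable def mul (x y : SSurreal) : SSurreal where
  length := x.length * y.length
  sign γ := if γ < x.length * y.length then y.sign (γ / x.length) * x.sign (γ % x.length) else 0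
  sign_mem := by
    intro γ h
    try dsimp only
    rw [if_pos h]
    have hx0 : x.length ≠ 0 := by
      intro h0; rw [h0, zero_mul] at h; exact absurd h (by simp)
    have h1 : γ / x.length < y.length := by
      rwa [Ordinal.div_lt hx0]
    have h2 : γ % x.length < x.length := Ordinal.mod_lt γ hx0
    rcases y.sign_mem _ h1 with hy | hy <;> rcases x.sign_mem _ h2 with hx | hx <;>
      simp [hy, hx]
  sign_zero := fun γ h => if_neg h

/-- `s` is the supremum of `C` with respect to simplicity. -/
def IsSimpSup (C : Set SSurreal) (s : SSurreal) : Prop :=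
  (∀ x ∈ C, sle x s) ∧ ∀ t, (∀ x ∈ C, sle x t) → sle s t

/-- The supremum of a ⊏-chain of sign sequences (their union), when it
exists; junk value `zero` otherwise. -/
noncomputable def chainSup (C : Set SSurreal) : SSurreal :=
  if h : ∃ s, IsSimpSup C s then h.choose else zero

/-- Transfinite concatenation `[α, f] = ∔_{γ<α} f(γ)`. -/
noncomputable def concatSum (α : Ordinal) (f : Ordinal → SSurreal) : SSurreal :=
  Ordinal.limitRecOn α zero (fun β ih => concat ih (f β))
    (fun γ _ ih => chainSup (Set.range fun p : Set.Iio γ => ih p.1 p.2))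

/-- Restriction of `z` to an initial segment of length (at most) `β`. -/
noncomputable def trunc (z : SSurreal) (β : Ordinal) : SSurreal where
  length := min β z.length
  sign α := if α < min β z.length then z.sign α else 0
  sign_mem := fun α h => by
    try dsimp only
    rw [if_pos h]; exact z.sign_mem α (h.trans_le (min_le_right _ _))
  sign_zero := fun α h => if_neg h

/-- The number of `+1` signs occurring in `s` strictly below `γ`. -/
noncomputable def countPlus (s : Ordinal → ℤ) (γ : Ordinal) : Ordinal :=
  Ordinal.limitRecOn γ 0 (fun β ih => if s β = 1 then ih + 1 else ih)
    (fun γ' _ ih => ⨆ β : Set.Iio γ', ih β.1 β.2)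

/-- `τ_u`: the ordinal number of `+1` signs in the sign sequence of `u`. -/
noncomputable def tau (u : SSurreal) : Ordinal := countPlus u.sign u.length

end SSurreal


namespace SSurreal

lemma ext' {x y : SSurreal} (h1 : x.length = y.length)
    (h2 : ∀ α, α < x.length → x.sign α = y.sign α) : x = y := by
  obtain ⟨lx, sx, mx, zx⟩ := x
  obtain ⟨ly, sy, my, zy⟩ := y
  dsimp at h1 h2
  subst h1
  have : sx = sy := by
    funext α
    by_cases h : α < lx
    · exact h2 α h
    · rw [zx α h, zy α h]
  subst this
  rfl

lemma mul_length (x y : SSurreal) : (mul x y).length = x.length * y.length := rfl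

lemma mul_sign (x y : SSurreal) (γ : Ordinal) :
    (mul x y).sign γ =
      if γ < x.length * y.length then y.sign (γ / x.length) * x.sign (γ % x.length) else 0 := rfl

lemma mul_sign_of_lt (x y : SSurreal) {γ : Ordinal} (h : γ < x.length * y.length) :
    (mul x y).sign γ = y.sign (γ / x.length) * x.sign (γ % x.length) := if_pos h

lemma ne_zero_of_lt_mul {a b γ : Ordinal} (h : γ < a * b) :
    a ≠ 0 := by
  intro h0; rw [h0, zero_mul] at h; exact absurd h (by simp)

end SSurreal

open SSurreal in
/-- the concatenation product `⨰` is associative with identity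
`1`, distributes over `∔` on the left, and satisfies `x ⨰ (−1) = −x`. -/
theorem mul_assoc_identity_left_distrib_neg :
    (∀ x y z : SSurreal, mul (mul x y) z = mul x (mul y z)) ∧
    (∀ x : SSurreal, mul x one = x ∧ mul one x = x) ∧
    (∀ x y z : SSurreal, mul x (concat y z) = concat (mul x y) (mul x z)) ∧
    (∀ x : SSurreal, mul x negOne = neg x) := by
  refine ⟨?_, ?_, ?_, ?_⟩
  · -- associativity
    intro x y z
    refine SSurreal.ext' (mul_assoc _ _ _) ?_
    intro γ hγ
    rw [mul_length, mul_length, mul_assoc] at hγ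
    have hx : x.length ≠ 0 := ne_zero_of_lt_mul (by rwa [← mul_assoc] at hγ)
    have hxy : x.length * y.length ≠ 0 := by
      intro h0; rw [← mul_assoc, h0, zero_mul] at hγ; exact absurd hγ (by simp)
    have hy : y.length ≠ 0 := fun h0 => hxy (by rw [h0, mul_zero])
    set q := γ / (x.length * y.length) with hq
    set r := γ % (x.length * y.length) with hr
    have hrlt : r < x.length * y.length := Ordinal.mod_lt γ hxy
    have hdecomp : x.length * y.length * q + r = γ := Ordinal.div_add_mod γ _
    have hrx : r / x.length < y.length := (Ordinal.div_lt hx).2 hrlt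
    have hdx : γ / x.length = y.length * q + r / x.length := by
      rw [← hdecomp, mul_assoc, Ordinal.mul_add_div _ hx]
    have h1 : γ / x.length / y.length = q := by
      rw [hdx, Ordinal.mul_add_div _ hy, Ordinal.div_eq_zero_of_lt hrx, add_zero]
    have h2 : γ / x.length % y.length = r / x.length := by
      rw [hdx, Ordinal.mul_add_mod_self, Ordinal.mod_eq_of_lt hrx]
    have h3 : γ % x.length = r % x.length := by
      conv_lhs => rw [← hdecomp]
      rw [mul_assoc, Ordinal.mul_add_mod_self]
    have hγ' : γ < x.length * y.length * z.length := by rwa [mul_assoc]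
    rw [mul_sign_of_lt _ _ hγ', mul_sign_of_lt x (mul y z) hγ]
    rw [mul_sign_of_lt, mul_sign_of_lt]
    · rw [mul_length, h1, h2, h3, hq, hr, mul_assoc]
    · rw [hdx]
      calc y.length * q + r / x.length < y.length * q + y.length := by
            exact (add_lt_add_iff_left _).2 hrx
        _ = y.length * (q + 1) := by rw [mul_add, mul_one]
        _ ≤ y.length * z.length := by
            refine mul_le_mul_right ?_ _
            rw [Order.add_one_le_iff, hq, Ordinal.div_lt hxy]
            rwa [← mul_assoc] at hγ
    · exact hrlt
  · -- identities
    intro x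
    constructor
    · refine SSurreal.ext' (by rw [mul_length]; show x.length * 1 = x.length; rw [mul_one]) ?_
      intro γ hγ
      rw [mul_length] at hγ
      have h1 : SSurreal.one.length = 1 := rfl
      rw [h1, mul_one] at hγ
      have hx : x.length ≠ 0 := fun h0 => by rw [h0] at hγ; simp at hγ
      rw [mul_sign_of_lt _ _ (by rw [h1, mul_one]; exact hγ)]
      have hd : γ / x.length = 0 := Ordinal.div_eq_zero_of_lt hγ
      have hm : γ % x.length = γ := Ordinal.mod_eq_of_lt hγ
      rw [hd, hm]
      have : SSurreal.one.sign 0 = 1 := by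
        show (if (0:Ordinal) < 1 then (1:ℤ) else 0) = 1
        rw [if_pos zero_lt_one]
      rw [this, one_mul]
    · refine SSurreal.ext' (by rw [mul_length]; show (1:Ordinal) * x.length = x.length; rw [one_mul]) ?_
      intro γ hγ
      rw [mul_length] at hγ
      have h1 : SSurreal.one.length = 1 := rfl
      rw [h1, one_mul] at hγ
      rw [mul_sign_of_lt _ _ (by rw [h1, one_mul]; exact hγ)]
      rw [h1, Ordinal.div_one, Ordinal.mod_one]
      have : SSurreal.one.sign 0 = 1 := by
        show (if (0:Ordinal) < 1 then (1:ℤ) else 0) = 1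
        rw [if_pos zero_lt_one]
      rw [this, mul_one]
  · -- left distributivity
    intro x y z
    have hlen : (mul x (concat y z)).length = (concat (mul x y) (mul x z)).length := by
      show x.length * (y.length + z.length) = x.length * y.length + x.length * z.length
      rw [mul_add]
    refine SSurreal.ext' hlen ?_
    intro γ hγ
    have hγ' : γ < x.length * (y.length + z.length) := hγ
    have hx : x.length ≠ 0 := ne_zero_of_lt_mul hγ'
    rw [mul_sign_of_lt _ _ hγ']
    show (concat y z).sign (γ / x.length) * x.sign (γ % x.length) =
      if γ < (mul x y).length then (mul x y).sign γ
        else (mul x z).sign (γ - (mul x y).length)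
    rw [mul_length]
    by_cases hc : γ < x.length * y.length
    · rw [if_pos hc, mul_sign_of_lt _ _ hc]
      have hd : γ / x.length < y.length := (Ordinal.div_lt hx).2 hc
      show (if γ / x.length < y.length then y.sign (γ / x.length)
          else z.sign (γ / x.length - y.length)) * x.sign (γ % x.length) = _
      rw [if_pos hd]
    · rw [if_neg hc]
      set δ := γ - x.length * y.length with hδ
      have hle : x.length * y.length ≤ γ := le_of_not_gt hc
      have hdecomp : x.length * y.length + δ = γ := Ordinal.add_sub_cancel_of_le hle
      have hδlt : δ < x.length * z.length := by
        rw [hδ, Ordinal.sub_lt_of_le hle, ← mul_add]; exact hγ'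
      rw [mul_sign_of_lt _ _ hδlt]
      have hdiv : γ / x.length = y.length + δ / x.length := by
        rw [← hdecomp, Ordinal.mul_add_div _ hx]
      have hmod : γ % x.length = δ % x.length := by
        conv_lhs => rw [← hdecomp]
        rw [Ordinal.mul_add_mod_self]
      have hnd : ¬ γ / x.length < y.length := by
        rw [hdiv]; exact not_lt_of_ge le_self_add
      show (if γ / x.length < y.length then y.sign (γ / x.length)
          else z.sign (γ / x.length - y.length)) * x.sign (γ % x.length) = _
      rw [if_neg hnd, hdiv, Ordinal.add_sub_cancel, hmod]
  · -- x ⨰ (-1) = -x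
    intro x
    refine SSurreal.ext' (by show x.length * 1 = x.length; rw [mul_one]) ?_
    intro γ hγ
    rw [mul_length] at hγ
    have h1 : negOne.length = 1 := rfl
    rw [h1, mul_one] at hγ
    rw [mul_sign_of_lt _ _ (by rw [h1, mul_one]; exact hγ)]
    rw [Ordinal.div_eq_zero_of_lt hγ, Ordinal.mod_eq_of_lt hγ]
    have : negOne.sign 0 = -1 := by simp [negOne]
    rw [this]
    show -1 * x.sign γ = - x.sign γ
    ring
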